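/- Let L be any finitary first-order language and φ an L-sentence. If there is an L-sentence χ expressing θ*(φ), then there is a universal (Π⁰₁) L-sentence expressing θ*(φ). Hence θ*(φ) is expressible by an L-sentence iff it is expressible by a universal L-sentence. -/

import Mathlib

/- STATEMENT 12: For any finitary first-order language L and L-sentence φ, if θ*(φ)
(satisfiability of φ in an extension) is expressible by an L-sentence, then it is
expressible by a universal (Π⁰₁) L-sentence. -/

open FirstOrder Language

universe u v

namespace SatSub

/-- A universal (Π⁰₁) sentence: `∀ x₁ … x_k, ψ` with `ψ` quantifier-free. -/
def IsUniversalSentence {L : FirstOrder.Language.{u, v}} (χ : L.Sentence) : Prop :=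
  ∃ (k : ℕ) (ψ : L.BoundedFormula Empty k), ψ.IsQF ∧ χ = ψ.alls

section Aux

variable {L : FirstOrder.Language.{u, v}}

lemma isQF_restrictFreeVar {α β : Type*} [DecidableEq α] {n : ℕ}
    {φ : L.BoundedFormula α n} (h : φ.IsQF) (f : φ.freeVarFinset → β) :
    (φ.restrictFreeVar f).IsQF := by
  induction h with
  | falsum => exact BoundedFormula.isQF_bot
  | of_isAtomic h =>
    cases h with
    | equal t₁ t₂ => exact (BoundedFormula.IsAtomic.equal _ _).isQF
    | rel R ts => exact (BoundedFormula.IsAtomic.rel _ _).isQF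
  | imp h₁ h₂ ih₁ ih₂ => exact (ih₁ _).imp (ih₂ _)

lemma realize_castLE_of_isQF {M : Type*} [L.Structure M] {α : Type*} {m n : ℕ} (h : m ≤ n)
    {φ : L.BoundedFormula α m} (hφ : φ.IsQF) {v : α → M} {xs : Fin n → M} :
    (φ.castLE h).Realize v xs ↔ φ.Realize v (xs ∘ Fin.castLE h) := by
  induction hφ with
  | falsum => rfl
  | of_isAtomic hA =>
    cases hA with
    | equal t₁ t₂ =>
      simp [Term.bdEqual, BoundedFormula.castLE, BoundedFormula.Realize, Term.realize_relabel,
        Sum.elim_comp_map]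
    | rel R ts =>
      simp [Relations.boundedFormula, BoundedFormula.castLE, BoundedFormula.Realize,
        Term.realize_relabel, Sum.elim_comp_map, Function.comp_def]
      rw [show (fun x => Sum.elim v xs (Sum.map id (Fin.castLE h) x))
          = Sum.elim v fun x => xs (Fin.castLE h x) from funext fun x => by cases x <;> rfl]
  | imp h₁ h₂ ih₁ ih₂ =>
    simp only [BoundedFormula.castLE, BoundedFormula.realize_imp, ih₁, ih₂]


/-- If a nonempty structure `A` satisfies every universal consequence of `χ`, then every
quantifier-free fact about finitely many elements of `A` can be realized in some model of `χ`. -/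
lemma exists_model_realizing_qf (χ : L.Sentence)
    (A : Type (max u v)) [L.Structure A] [Nonempty A]
    (hA : ∀ σ : L.Sentence, IsUniversalSentence σ →
      (∀ (M : Type (max u v)) [L.Structure M] [Nonempty M], M ⊨ χ → M ⊨ σ) →
      A ⊨ σ)
    (φ₀ : L.Formula A) (hQF : φ₀.IsQF) (h0 : φ₀.Realize (id : A → A)) :
    ∃ (M : Type (max u v)) (_ : L.Structure M) (_ : Nonempty M) (w : A → M),
      M ⊨ χ ∧ φ₀.Realize w := by
  classical
  by_contra hc
  have hc' : ∀ (M : Type (max u v)) [L.Structure M] [Nonempty M] (w : A → M),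
      M ⊨ χ → ¬ φ₀.Realize w := by
    intro M iM nM w hχ hw
    exact hc ⟨M, iM, nM, w, hχ, hw⟩
  set s : Set A := (↑φ₀.freeVarFinset : Set A) with hs
  have hsub : ↑φ₀.freeVarFinset ⊆ s := subset_rfl
  set φ₁ : L.Formula s := φ₀.restrictFreeVar (Set.inclusion hsub) with hφ₁
  haveI : Finite s := φ₀.freeVarFinset.finite_toSet
  obtain ⟨n', ⟨e⟩⟩ := Finite.exists_equiv_fin s
  set ψu : L.BoundedFormula Empty (n' + 0) :=
    BoundedFormula.relabel (fun a : s => (Sum.inr (e a) : Empty ⊕ Fin n')) φ₁.not with hψu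
  have hψuQF : ψu.IsQF := ((isQF_restrictFreeVar hQF _).not).relabel _
  have hcons : ∀ (M : Type (max u v)) [L.Structure M] [Nonempty M], M ⊨ χ → M ⊨ ψu.alls := by
    intro M _ _ hMχ
    have : ∀ xs : Fin (n' + 0) → M, ψu.Realize (default : Empty → M) xs := by
      intro xs
      rw [hψu, BoundedFormula.realize_relabel, BoundedFormula.realize_not]
      intro hreal
      -- hreal : φ₁.Realize (valuation) (xs ∘ natAdd n')
      set i : s → M := fun a => xs (Fin.castAdd 0 (e a)) with hi
      have hval : (Sum.elim (default : Empty → M) (xs ∘ Fin.castAdd 0) ∘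
          fun a : s => (Sum.inr (e a) : Empty ⊕ Fin n')) = i := rfl
      rw [hval] at hreal
      have hxs0 : (xs ∘ Fin.natAdd n') = (default : Fin 0 → M) := Subsingleton.elim _ _
      rw [hxs0] at hreal
      -- extend i to a valuation on all of A
      have hM : Inhabited M := Classical.inhabited_of_nonempty inferInstance
      set w : A → M := fun a => if h : a ∈ s then i ⟨a, h⟩ else default with hw
      have hwi : (w ∘ (Subtype.val : s → A)) = i := by
        funext a
        simp [hw, a.2]
      rw [← hwi] at hreal
      exact hc' M w hMχ ((BoundedFormula.realize_restrictFreeVar' hsub).1 hreal)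
    exact BoundedFormula.realize_alls.2 this
  have hAψ : A ⊨ ψu.alls := hA ψu.alls ⟨n' + 0, ψu, hψuQF, rfl⟩ hcons
  -- instantiate at the canonical tuple
  have := BoundedFormula.realize_alls.1 hAψ (fun j : Fin (n' + 0) => ((e.symm j : s) : A))
  rw [hψu, BoundedFormula.realize_relabel, BoundedFormula.realize_not] at this
  apply this
  have hval : (Sum.elim (default : Empty → A)
      ((fun j : Fin (n' + 0) => ((e.symm j : s) : A)) ∘ Fin.castAdd 0) ∘
      fun a : s => (Sum.inr (e a) : Empty ⊕ Fin n')) = (id ∘ (Subtype.val : s → A)) := by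
    funext a
    have : Fin.castAdd 0 (e a) = e a := Fin.ext rfl
    simp [this]
  rw [hval, show ((fun j : Fin (n' + 0) => ((e.symm j : s) : A)) ∘ Fin.natAdd n')
      = (default : Fin 0 → A) from Subsingleton.elim _ _]
  exact (BoundedFormula.realize_restrictFreeVar' hsub (v := (id : A → A))
    (xs := (default : Fin 0 → A))).2 h0


/-- Łoś–Tarski, hard direction: a structure satisfying all universal consequences of `χ`
embeds into a model of `χ`. -/
lemma embeds_into_model (χ : L.Sentence)
    (A : Type (max u v)) [L.Structure A] [Nonempty A]
    (hA : ∀ σ : L.Sentence, IsUniversalSentence σ →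
      (∀ (M : Type (max u v)) [L.Structure M] [Nonempty M], M ⊨ χ → M ⊨ σ) →
      A ⊨ σ) :
    ∃ (B : Type (max u v)) (_ : L.Structure B) (_ : Nonempty B),
      B ⊨ χ ∧ Nonempty (A ↪[L] B) := by
  classical
  set P : L.Formula A → Prop := fun φ => φ.IsQF ∧ φ.Realize (id : A → A) with hP
  set Tf : {φ // P φ} → L[[A]].Theory := fun i =>
    (L.lhomWithConstants A).onTheory {χ} ∪ {Formula.equivSentence i.1} with hTf
  have hsat : Theory.IsSatisfiable (⋃ i, Tf i) := by
    rw [Theory.isSatisfiable_iUnion_iff_isSatisfiable_iUnion_finset]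
    intro s₀
    -- fold the finitely many diagram formulas into one
    set l : List (L.Formula A) := s₀.toList.map Subtype.val with hl
    set φ₀ : L.Formula A := l.foldr (· ⊓ ·) ⊤ with hφ₀
    have hlP : ∀ φ ∈ l, P φ := by
      intro φ hφ
      rw [hl, List.mem_map] at hφ
      obtain ⟨i, _, rfl⟩ := hφ
      exact i.2
    have hfold : ∀ lst : List (L.Formula A), (∀ φ ∈ lst, P φ) →
        (lst.foldr (· ⊓ ·) (⊤ : L.Formula A)).IsQF ∧
        (lst.foldr (· ⊓ ·) (⊤ : L.Formula A)).Realize (id : A → A) := by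
      intro lst hlst
      induction lst with
      | nil => exact ⟨BoundedFormula.IsQF.top, by simp [Formula.Realize]⟩
      | cons a t iht =>
        have ha := hlst a List.mem_cons_self
        have ih := iht (fun φ hφ => hlst φ (List.mem_cons_of_mem _ hφ))
        exact ⟨ha.1.inf ih.1, (Formula.realize_inf).2 ⟨ha.2, ih.2⟩⟩
    obtain ⟨hφ₀QF, hφ₀id⟩ := hfold l hlP
    obtain ⟨M, iM, nM, w, hMχ, hw⟩ := exists_model_realizing_qf χ A hA φ₀ hφ₀QF hφ₀id
    -- expand M with constants interpreted by w
    letI : (constantsOn A).Structure M := constantsOn.structure w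
    have hMall : ∀ φ ∈ l, Formula.Realize (M := M) φ w := by
      have : ∀ lst : List (L.Formula A),
          Formula.Realize (M := M) (lst.foldr (· ⊓ ·) (⊤ : L.Formula A)) w →
          ∀ φ ∈ lst, Formula.Realize (M := M) φ w := by
        intro lst
        induction lst with
        | nil => intro _ φ hφ; simp at hφ
        | cons a t iht =>
          intro hfold φ hφ
          rw [List.foldr_cons, Formula.realize_inf] at hfold
          rcases List.mem_cons.1 hφ with rfl | hφ
          · exact hfold.1
          · exact iht hfold.2 φ hφ
      exact this l hw
    have hMmod : M ⊨ ⋃ i ∈ s₀, Tf i := by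
      refine ⟨fun σ hσ => ?_⟩
      simp only [Set.mem_iUnion] at hσ
      obtain ⟨i, hi, hσ⟩ := hσ
      rcases hσ with hσ | hσ
      · obtain ⟨τ, hτ, rfl⟩ := hσ
        cases hτ
        exact (LHom.realize_onSentence (M := M) _ χ).2 hMχ
      · cases hσ
        have hreal : Formula.Realize (M := M)
            (Formula.equivSentence.symm (Formula.equivSentence i.1)) w := by
          rw [Equiv.symm_apply_apply]
          exact hMall i.1 (by rw [hl, List.mem_map]; exact ⟨i, Finset.mem_toList.2 hi, rfl⟩)
        exact (Formula.realize_equivSentence_symm M (Formula.equivSentence i.1) w).1 hreal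
    exact Theory.Model.isSatisfiable M
  obtain ⟨N⟩ := hsat
  letI iN : L.Structure N := (L.lhomWithConstants A).reduct N
  haveI hexp : (L.lhomWithConstants A).IsExpansionOn N := LHom.isExpansionOn_reduct _ _
  have hiota : Nonempty {φ // P φ} := ⟨⟨⊤, BoundedFormula.IsQF.top, by simp [Formula.Realize]⟩⟩
  obtain ⟨i₀⟩ := hiota
  have hNχ : N ⊨ χ := by
    have hmem : (L.lhomWithConstants A).onSentence χ ∈ ⋃ i, Tf i :=
      Set.mem_iUnion.2 ⟨i₀, Or.inl ⟨χ, rfl, rfl⟩⟩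
    have hsent : (N : Type (max u v)) ⊨ (L.lhomWithConstants A).onSentence χ :=
      Theory.realize_sentence_of_mem (⋃ i, Tf i) hmem
    exact (LHom.realize_onSentence (M := (N : Type (max u v))) _ χ).1 hsent
  have hdiag : ∀ φ : L.Formula A, P φ → φ.Realize (fun a => ((L.con a : L[[A]].Constants) : N)) := by
    intro φ hφ
    have hsent : (N : Type (max u v)) ⊨ Formula.equivSentence φ :=
      Theory.realize_sentence_of_mem (⋃ i, Tf i) (Set.mem_iUnion.2 ⟨⟨φ, hφ⟩, Or.inr rfl⟩)
    exact (Formula.realize_equivSentence _ _).1 hsent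
  set f : A → N := fun a => ((L.con a : L[[A]].Constants) : N) with hf
  have hinj : Function.Injective f := by
    intro a b hab
    by_contra hne
    have := hdiag ((Term.equal (Term.var a) (Term.var b)).not)
      ⟨(BoundedFormula.IsAtomic.equal _ _).isQF.not, by
        rw [Formula.realize_not, Formula.realize_equal]
        simpa using hne⟩
    rw [Formula.realize_not, Formula.realize_equal] at this
    exact this (by simpa using hab)
  have hfun : ∀ {n} (fn : L.Functions n) (x : Fin n → A), f (Structure.funMap fn x) = Structure.funMap fn (f ∘ x) := by
    intro n fn x
    have := hdiag (Term.equal (Term.func fn (fun i => Term.var (x i))) (Term.var (Structure.funMap fn x)))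
      ⟨(BoundedFormula.IsAtomic.equal _ _).isQF, by
        rw [Formula.realize_equal]
        simp [Term.realize]⟩
    rw [Formula.realize_equal] at this
    simp only [Term.realize] at this
    exact this.symm
  have hrel : ∀ {n} (r : L.Relations n) (x : Fin n → A),
      Structure.RelMap r (f ∘ x) ↔ Structure.RelMap r x := by
    intro n r x
    by_cases hR : Structure.RelMap r x
    · have := hdiag (r.formula (fun i => Term.var (x i)))
        ⟨(BoundedFormula.IsAtomic.rel _ _).isQF, by
          rw [Formula.realize_rel]
          simpa [Term.realize] using hR⟩
      rw [Formula.realize_rel] at this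
      simp only [Term.realize] at this
      exact iff_of_true this hR
    · have := hdiag ((r.formula (fun i => Term.var (x i))).not)
        ⟨(BoundedFormula.IsAtomic.rel _ _).isQF.not, by
          rw [Formula.realize_not, Formula.realize_rel]
          simpa [Term.realize] using hR⟩
      rw [Formula.realize_not, Formula.realize_rel] at this
      simp only [Term.realize] at this
      exact iff_of_false this hR
  refine ⟨N, iN, inferInstance, hNχ, ⟨⟨⟨f, hinj⟩, fun fn x => hfun fn x, fun r x => hrel r x⟩⟩⟩


/-- Conjunction of finitely many universal sentences is equivalent to a single one. -/
lemma exists_universal_conj (U₀ : Finset L.Sentence)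
    (hU : ∀ σ ∈ U₀, IsUniversalSentence σ) :
    ∃ χ' : L.Sentence, IsUniversalSentence χ' ∧
      ∀ (M : Type (max u v)) [L.Structure M] [Nonempty M],
        M ⊨ χ' ↔ ∀ σ ∈ U₀, M ⊨ σ := by
  classical
  induction U₀ using Finset.induction_on with
  | empty =>
    refine ⟨(⊤ : L.BoundedFormula Empty 0).alls, ⟨0, ⊤, BoundedFormula.IsQF.top, rfl⟩, ?_⟩
    intro M _ _
    simp [BoundedFormula.alls, Sentence.Realize]
  | @insert σ s hσs ih =>
    obtain ⟨χ₁, ⟨k₁, ψ₁, hψ₁, rfl⟩, hiff₁⟩ := ih (fun τ hτ => hU τ (Finset.mem_insert_of_mem hτ))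
    obtain ⟨k₂, ψ₂, hψ₂, hσ⟩ := hU σ (Finset.mem_insert_self σ s)
    refine ⟨((ψ₁.castLE (le_max_left k₁ k₂)) ⊓ (ψ₂.castLE (le_max_right k₁ k₂))).alls,
      ⟨max k₁ k₂, _, (hψ₁.castLE).inf (hψ₂.castLE), rfl⟩, ?_⟩
    intro M _ _
    haveI : Inhabited M := Classical.inhabited_of_nonempty inferInstance
    have key : (M ⊨ ((ψ₁.castLE (le_max_left k₁ k₂)) ⊓ (ψ₂.castLE (le_max_right k₁ k₂))).alls)
        ↔ ((M ⊨ ψ₁.alls) ∧ (M ⊨ ψ₂.alls)) := by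
      simp only [Sentence.Realize, BoundedFormula.realize_alls,
        BoundedFormula.realize_inf, realize_castLE_of_isQF _ hψ₁, realize_castLE_of_isQF _ hψ₂]
      constructor
      · intro hx
        constructor
        · intro xs
          have := (hx (fun i => if h : (i : ℕ) < k₁ then xs ⟨i, h⟩ else default)).1
          convert this using 2
          funext i
          simp [Fin.castLE, i.isLt]
        · intro xs
          have := (hx (fun i => if h : (i : ℕ) < k₂ then xs ⟨i, h⟩ else default)).2
          convert this using 2
          funext i
          simp [Fin.castLE, i.isLt]
      · rintro ⟨h₁, h₂⟩ xs
        exact ⟨h₁ _, h₂ _⟩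
    rw [key, hiff₁ M]
    constructor
    · rintro ⟨h1, h2⟩ τ hτ
      rcases Finset.mem_insert.1 hτ with rfl | hτ
      · rw [hσ]; exact h2
      · exact h1 τ hτ
    · intro hall
      exact ⟨fun τ hτ => hall τ (Finset.mem_insert_of_mem hτ),
        hσ ▸ hall σ (Finset.mem_insert_self σ s)⟩


end Aux

theorem thetaStar_expressible_iff_universal
    {L : FirstOrder.Language.{u, v}} (φ : L.Sentence)
    (h : ∃ χ : L.Sentence,
        ∀ (M : Type (max u v)) [L.Structure M] [Nonempty M],
          M ⊨ χ ↔ ∃ (B : Type (max u v)) (_ : L.Structure B),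
            B ⊨ φ ∧ Nonempty (M ↪[L] B)) :
    ∃ χ : L.Sentence, IsUniversalSentence χ ∧
      ∀ (M : Type (max u v)) [L.Structure M] [Nonempty M],
        M ⊨ χ ↔ ∃ (B : Type (max u v)) (_ : L.Structure B),
          B ⊨ φ ∧ Nonempty (M ↪[L] B) := by
  classical
  obtain ⟨χ, hχ⟩ := h
  -- the set of universal consequences of χ
  set U : L.Theory := {σ | IsUniversalSentence σ ∧
    ∀ (M : Type (max u v)) [L.Structure M] [Nonempty M], M ⊨ χ → M ⊨ σ} with hUdef
  -- U ∪ {¬χ} is unsatisfiable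
  have hUnsat : ¬ Theory.IsSatisfiable (U ∪ {χ.not}) := by
    rintro ⟨N⟩
    have hNU : ∀ σ ∈ U, (N : Type (max u v)) ⊨ σ := fun σ hσ =>
      Theory.realize_sentence_of_mem (U ∪ {χ.not}) (Set.mem_union_left _ hσ)
    have hNnχ : (N : Type (max u v)) ⊨ χ.not :=
      Theory.realize_sentence_of_mem (U ∪ {χ.not}) (Set.mem_union_right _ rfl)
    have hAcons : ∀ σ : L.Sentence, IsUniversalSentence σ →
        (∀ (M : Type (max u v)) [L.Structure M] [Nonempty M], M ⊨ χ → M ⊨ σ) →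
        (N : Type (max u v)) ⊨ σ := fun σ hNF hcons => hNU σ ⟨hNF, hcons⟩
    obtain ⟨B, iB, nB, hBχ, ⟨emb⟩⟩ := embeds_into_model χ (N : Type (max u v)) hAcons
    obtain ⟨C, iC, hCφ, ⟨emb'⟩⟩ := (hχ B).1 hBχ
    have hNχ : (N : Type (max u v)) ⊨ χ :=
      (hχ (N : Type (max u v))).2 ⟨C, iC, hCφ, ⟨emb'.comp emb⟩⟩
    exact (Sentence.realize_not _).1 hNnχ hNχ
  -- extract a finite subset by compactness
  rw [Theory.isSatisfiable_iff_isFinitelySatisfiable] at hUnsat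
  rw [Theory.IsFinitelySatisfiable] at hUnsat
  push_neg at hUnsat
  obtain ⟨T₀, hT₀sub, hT₀⟩ := hUnsat
  set U₀ : Finset L.Sentence := T₀.filter (fun σ => σ ∈ U) with hU₀def
  have hU₀NF : ∀ σ ∈ U₀, IsUniversalSentence σ := fun σ hσ =>
    ((Finset.mem_filter.1 hσ).2 : σ ∈ U).1
  obtain ⟨χ', hNF', hiff'⟩ := exists_universal_conj U₀ hU₀NF
  refine ⟨χ', hNF', fun M _ _ => ?_⟩
  constructor
  · intro hMχ'
    have hMχ : M ⊨ χ := by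
      by_contra hnχ
      have hmod : M ⊨ (↑T₀ : L.Theory) := by
        refine ⟨fun σ hσ => ?_⟩
        rcases hT₀sub hσ with hσU | hσn
        · exact (hiff' M).1 hMχ' σ (Finset.mem_filter.2 ⟨hσ, hσU⟩)
        · cases hσn
          exact (Sentence.realize_not _).2 hnχ
      exact hT₀ (Theory.Model.isSatisfiable M)
    exact (hχ M).1 hMχ
  · intro hRHS
    have hMχ : M ⊨ χ := (hχ M).2 hRHS
    exact (hiff' M).2 (fun σ hσ => ((Finset.mem_filter.1 hσ).2 : σ ∈ U).2 M hMχ)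


end SatSub
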